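/- In the simplicial setup, set M₁ := ∪_{b∈B_A} m_b·M_T. Then M_S \ M₁ = ∪_{n∈N₁} M_{nS}; that is, a monomial of S fails to be of the form m_b·(monomial in the y-variables) with b ∈ B_A if and only if it is divisible by some element of N₁. -/

import Mathlib

namespace SimplicialToric

/-- `eVec d α i` is `α` times the `i`-th standard basis vector of `ℕ^d`. -/
def eVec (d α : ℕ) (i : Fin d) : Fin d → ℕ := fun j => if j = i then α else 0

/-- The Hilbert basis of a submonoid `B ⊆ ℕ^d`: the set of irreducible elements
(in `ℕ^d` the only unit is `0`). -/
def Hilb {d : ℕ} (B : AddSubmonoid (Fin d → ℕ)) : Set (Fin d → ℕ) :=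
  {b | b ∈ B ∧ b ≠ 0 ∧ ∀ x ∈ B, ∀ y ∈ B, b = x + y → x = 0 ∨ y = 0}

/-- The submonoid `A = Σᵢ ℤ≥0·eᵢ = αℤ≥0^d`. -/
def Amon (d α : ℕ) : AddSubmonoid (Fin d → ℕ) :=
  AddSubmonoid.closure (Set.range (eVec d α))

/-- `B_A = {x ∈ B : x − a ∉ B for every a ∈ A \ {0}}`. -/
def BA {d : ℕ} (B : AddSubmonoid (Fin d → ℕ)) (α : ℕ) : Set (Fin d → ℕ) :=
  {x | x ∈ B ∧ ∀ z ∈ Amon d α, z ≠ 0 → ∀ y ∈ B, x ≠ y + z}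

/-- The generators `a₁,…,a_c,e₁,…,e_d` of `B`, indexed by the variables of
`S = K[x₁,…,x_c,y₁,…,y_d]`; variable `Fin.castAdd d i` is `xᵢ`, variable
`Fin.natAdd c j` is `yⱼ`. -/
def gens (c d α : ℕ) (a : Fin c → Fin d → ℕ) : Fin (c + d) → Fin d → ℕ :=
  Fin.addCases a (eVec d α)

/-- The element of `B` represented by the monomial with exponent vector `σ`:
`π(x^μ y^ν) = t^(valE σ)`. -/
def valE (c d α : ℕ) (a : Fin c → Fin d → ℕ) (σ : Fin (c + d) →₀ ℕ) : Fin d → ℕ :=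
  ∑ v : Fin (c + d), σ v • gens c d α a v

/-- total degree of a monomial (exponent vector). -/
def degE {N : ℕ} (σ : Fin N →₀ ℕ) : ℕ := ∑ v, σ v

/-- the graded reverse lexicographic order: `grevlex σ τ` means `σ ≺ τ`,
i.e. `deg σ < deg τ`, or degrees agree and the last nonzero entry of `τ − σ`
is negative. -/
def grevlex {N : ℕ} (σ τ : Fin N →₀ ℕ) : Prop :=
  degE σ < degE τ ∨ (degE σ = degE τ ∧ ∃ k, τ k < σ k ∧ ∀ l, k < l → σ l = τ l)

/-- `x ∼ y` iff `x − y ∈ gp(A) = αℤ^d`. -/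
def Rel {d : ℕ} (α : ℕ) (x y : Fin d → ℕ) : Prop :=
  ∀ j, (α : ℤ) ∣ (x j : ℤ) - (y j : ℤ)

/-- `Γ` is an equivalence class of `B_A` modulo `αℤ^d`. -/
def IsClass {d : ℕ} (B : AddSubmonoid (Fin d → ℕ)) (α : ℕ) (Γ : Set (Fin d → ℕ)) : Prop :=
  ∃ x ∈ BA B α, Γ = {y | y ∈ BA B α ∧ Rel α x y}

/-- the total order on an equivalence class of `B_A`: `b ≺ c` iff the last
nonzero entry of `b − c` is negative. -/
def ltCls {d : ℕ} (x y : Fin d → ℕ) : Prop :=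
  ∃ k, x k < y k ∧ ∀ l, k < l → x l = y l

/-- `joinSub x y = x∨y − y`, where `x∨y` is the componentwise maximum. -/
def joinSub {d : ℕ} (x y : Fin d → ℕ) : Fin d → ℕ := fun j => max (x j) (y j) - y j

/-- the monomial with exponents `σ` lies in `T = K[y₁,…,y_d]`. -/
def yOnly (c d : ℕ) (σ : Fin (c + d) →₀ ℕ) : Prop := ∀ i : Fin c, σ (Fin.castAdd d i) = 0

/-- the monomial with exponents `σ` involves only the `x`-variables. -/
def xOnly (c d : ℕ) (σ : Fin (c + d) →₀ ℕ) : Prop := ∀ j : Fin d, σ (Fin.natAdd c j) = 0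

/-- the set `N₁`, for a given choice `m` of the minimal monomials `m_b`. -/
def N1set (c d α : ℕ) (a : Fin c → Fin d → ℕ) (B : AddSubmonoid (Fin d → ℕ))
    (m : (Fin d → ℕ) → (Fin (c + d) →₀ ℕ)) : Set (Fin (c + d) →₀ ℕ) :=
  {n | ∃ (i : Fin c) (b : Fin d → ℕ), b ∈ BA B α ∧
    n = Finsupp.single (Fin.castAdd d i) 1 + m b ∧ n ≠ m (a i + b)}

/-- the set `N₂ = ∪_Γ N_Γ`, where `N_Γ = {n(bᵢ,bⱼ) = m_{bⱼ}·m_{bᵢ∨bⱼ−bⱼ} : bᵢ ≺ bⱼ in Γ}`. -/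
def N2set {d : ℕ} (c α : ℕ) (B : AddSubmonoid (Fin d → ℕ))
    (m : (Fin d → ℕ) → (Fin (c + d) →₀ ℕ)) : Set (Fin (c + d) →₀ ℕ) :=
  {n | ∃ Γ, IsClass B α Γ ∧ ∃ bi ∈ Γ, ∃ bj ∈ Γ, ltCls bi bj ∧ n = m bj + m (joinSub bi bj)}

/-- `σ` is the exponent vector of the initial (i.e. `≺`-largest) term of `f`. -/
def IsLeadMon {N : ℕ} {K : Type*} [Field K] (f : MvPolynomial (Fin N) K)
    (σ : Fin N →₀ ℕ) : Prop :=
  σ ∈ f.support ∧ ∀ τ ∈ f.support, τ = σ ∨ grevlex τ σ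

/-- the initial ideal of `I` with respect to the graded reverse lexicographic order. -/
noncomputable def initialIdeal {N : ℕ} {K : Type*} [Field K] (I : Ideal (MvPolynomial (Fin N) K)) :
    Ideal (MvPolynomial (Fin N) K) :=
  Ideal.span {g | ∃ f ∈ I, ∃ σ, IsLeadMon f σ ∧ g = MvPolynomial.monomial σ (1 : K)}

end SimplicialToric

namespace SimplicialToric

section Aux

variable {c d α : ℕ} {a : Fin c → Fin d → ℕ} {B : AddSubmonoid (Fin d → ℕ)}
  {m : (Fin d → ℕ) → (Fin (c + d) →₀ ℕ)}

lemma degE_add {N : ℕ} (σ τ : Fin N →₀ ℕ) : degE (σ + τ) = degE σ + degE τ := by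
  simp [degE, Finsupp.add_apply, Finset.sum_add_distrib]

lemma degE_single {N : ℕ} (v : Fin N) : degE (Finsupp.single v 1) = 1 := by
  simp [degE, Finsupp.single_apply]

lemma degE_eq_zero {N : ℕ} {σ : Fin N →₀ ℕ} (h : degE σ = 0) : σ = 0 := by
  ext v
  exact Finset.sum_eq_zero_iff.mp h v (Finset.mem_univ v)

lemma grevlex_irrefl {N : ℕ} (σ : Fin N →₀ ℕ) : ¬ grevlex σ σ := by
  rintro (h | ⟨-, k, hk, -⟩) <;> omega

lemma grevlex_asymm {N : ℕ} {σ τ : Fin N →₀ ℕ} (h1 : grevlex σ τ) (h2 : grevlex τ σ) : False := by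
  rcases h1 with h1 | ⟨hd1, k1, hk1, ha1⟩ <;> rcases h2 with h2 | ⟨hd2, k2, hk2, ha2⟩ <;> try omega
  rcases lt_trichotomy k1 k2 with h | h | h
  · have := ha1 k2 h; omega
  · subst h; omega
  · have := ha2 k1 h; omega

lemma grevlex_add_right {N : ℕ} {σ τ : Fin N →₀ ℕ} (ρ : Fin N →₀ ℕ) (h : grevlex σ τ) :
    grevlex (σ + ρ) (τ + ρ) := by
  rcases h with h | ⟨hd, k, hk, ha⟩
  · left; simp only [degE_add]; omega
  · right
    refine ⟨by simp [degE_add, hd], k, by simp only [Finsupp.add_apply]; omega,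
      fun l hl => by simp only [Finsupp.add_apply, ha l hl]⟩

lemma gens_castAdd (i : Fin c) : gens c d α a (Fin.castAdd d i) = a i := by
  simp [gens]

lemma gens_natAdd (j : Fin d) : gens c d α a (Fin.natAdd c j) = eVec d α j := by
  simp [gens]

lemma natAdd_ne_castAdd (j : Fin d) (i : Fin c) : Fin.natAdd c j ≠ Fin.castAdd d i := by
  simp only [Fin.ne_iff_vne, Fin.natAdd, Fin.castAdd, Fin.castLE]
  omega

lemma fin_split (u : Fin (c + d)) :
    (∃ i : Fin c, u = Fin.castAdd d i) ∨ ∃ j : Fin d, u = Fin.natAdd c j := by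
  rcases lt_or_ge u.val c with h | h
  · exact Or.inl ⟨⟨u.val, h⟩, by apply Fin.ext; simp⟩
  · refine Or.inr ⟨⟨u.val - c, by have := u.isLt; omega⟩, by apply Fin.ext; simp; omega⟩

lemma sum_eVec (j : Fin d) : ∑ l, eVec d α j l = α := by
  simp [eVec]

lemma sum_gens (hdeg : ∀ i, ∑ j, a i j = α) (v : Fin (c + d)) :
    ∑ j, gens c d α a v j = α := by
  rcases fin_split v with ⟨i, rfl⟩ | ⟨j, rfl⟩
  · rw [gens_castAdd]; exact hdeg i
  · rw [gens_natAdd]; exact sum_eVec j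

lemma valE_add (σ τ : Fin (c + d) →₀ ℕ) :
    valE c d α a (σ + τ) = valE c d α a σ + valE c d α a τ := by
  simp [valE, Finsupp.add_apply, add_smul, Finset.sum_add_distrib]

lemma valE_zero : valE c d α a 0 = 0 := by simp [valE]

lemma valE_single (v : Fin (c + d)) :
    valE c d α a (Finsupp.single v 1) = gens c d α a v := by
  simp [valE, Finsupp.single_apply]

end Aux

end SimplicialToric
namespace SimplicialToric

section Aux2

variable {c d α : ℕ} {a : Fin c → Fin d → ℕ} {B : AddSubmonoid (Fin d → ℕ)}
  {m : (Fin d → ℕ) → (Fin (c + d) →₀ ℕ)}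

lemma a_mem (hBgen : B = AddSubmonoid.closure (Set.range a ∪ Set.range (eVec d α)))
    (i : Fin c) : a i ∈ B := by
  rw [hBgen]; exact AddSubmonoid.subset_closure (Or.inl ⟨i, rfl⟩)

lemma eVec_mem (hBgen : B = AddSubmonoid.closure (Set.range a ∪ Set.range (eVec d α)))
    (j : Fin d) : eVec d α j ∈ B := by
  rw [hBgen]; exact AddSubmonoid.subset_closure (Or.inr ⟨j, rfl⟩)

lemma gens_mem (hBgen : B = AddSubmonoid.closure (Set.range a ∪ Set.range (eVec d α)))
    (v : Fin (c + d)) : gens c d α a v ∈ B := by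
  rcases fin_split v with ⟨i, rfl⟩ | ⟨j, rfl⟩
  · rw [gens_castAdd]; exact a_mem hBgen i
  · rw [gens_natAdd]; exact eVec_mem hBgen j

lemma valE_mem (hBgen : B = AddSubmonoid.closure (Set.range a ∪ Set.range (eVec d α)))
    (σ : Fin (c + d) →₀ ℕ) : valE c d α a σ ∈ B :=
  AddSubmonoid.sum_mem _ fun v _ => AddSubmonoid.nsmul_mem _ (gens_mem hBgen v) _

lemma sum_valE (hdeg : ∀ i, ∑ j, a i j = α) (σ : Fin (c + d) →₀ ℕ) :
    ∑ j, valE c d α a σ j = α * degE σ := by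
  calc ∑ j, valE c d α a σ j = ∑ j, ∑ v, σ v * gens c d α a v j := by
        simp [valE, Finset.sum_apply, Pi.smul_apply, smul_eq_mul]
    _ = ∑ v, σ v * ∑ j, gens c d α a v j := by
        rw [Finset.sum_comm]; simp [Finset.mul_sum]
    _ = α * degE σ := by
        simp only [sum_gens hdeg, degE, Finset.mul_sum]
        exact Finset.sum_congr rfl fun v _ => mul_comm _ _

lemma valE_eq_zero (hα : 0 < α) (hdeg : ∀ i, ∑ j, a i j = α) {σ : Fin (c + d) →₀ ℕ}
    (h : valE c d α a σ = 0) : σ = 0 := by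
  have h2 : α * degE σ = 0 := by rw [← sum_valE hdeg σ, h]; simp
  rcases Nat.mul_eq_zero.mp h2 with h3 | h3
  · omega
  · exact degE_eq_zero h3

lemma m_zero (hα : 0 < α) (hdeg : ∀ i, ∑ j, a i j = α)
    (hmval : ∀ b ∈ B, valE c d α a (m b) = b) : m 0 = 0 :=
  valE_eq_zero hα hdeg (hmval 0 B.zero_mem)

lemma zero_mem_BA : (0 : Fin d → ℕ) ∈ BA B α := by
  refine ⟨B.zero_mem, fun z hz hz0 y hy hxy => hz0 ?_⟩
  funext j
  have := congrFun hxy j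
  simp only [Pi.zero_apply, Pi.add_apply] at this ⊢
  omega

lemma BA_sub {b b₂ g : Fin d → ℕ} (hb : b ∈ BA B α) (hg : g ∈ B) (hb₂ : b₂ ∈ B)
    (he : b = g + b₂) : b₂ ∈ BA B α := by
  refine ⟨hb₂, fun z hz hz0 y hy hxy => hb.2 z hz hz0 (g + y) (B.add_mem hg hy) ?_⟩
  rw [he, hxy, add_assoc]

lemma eVec_mem_Amon (j : Fin d) : eVec d α j ∈ Amon d α :=
  AddSubmonoid.subset_closure ⟨j, rfl⟩

lemma eVec_ne_zero (hα : 0 < α) (j : Fin d) : eVec d α j ≠ 0 := fun h => by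
  have := congrFun h j
  simp [eVec] at this
  omega

lemma Amon_le (hBgen : B = AddSubmonoid.closure (Set.range a ∪ Set.range (eVec d α)))
    {z : Fin d → ℕ} (hz : z ∈ Amon d α) : z ∈ B := by
  rw [hBgen]
  exact AddSubmonoid.closure_mono Set.subset_union_right hz

lemma yOnly_zero : yOnly c d 0 := fun _ => rfl

lemma yOnly_add {τ₁ τ₂ : Fin (c + d) →₀ ℕ} (h1 : yOnly c d τ₁) (h2 : yOnly c d τ₂) :
    yOnly c d (τ₁ + τ₂) := fun i => by
  simp only [Finsupp.add_apply]
  rw [h1 i, h2 i]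

lemma yOnly_single (j : Fin d) : yOnly c d (Finsupp.single (Fin.natAdd c j) 1) := fun i => by
  rw [Finsupp.single_apply_eq_zero]
  intro h
  exact absurd h.symm (natAdd_ne_castAdd j i)

lemma yOnly_valE_mem_Amon {τ : Fin (c + d) →₀ ℕ} (hτ : yOnly c d τ) :
    valE c d α a τ ∈ Amon d α := by
  unfold valE
  rw [Fin.sum_univ_add]
  have h1 : ∑ i : Fin c, τ (Fin.castAdd d i) • gens c d α a (Fin.castAdd d i) = 0 :=
    Finset.sum_eq_zero fun i _ => by rw [hτ i, zero_smul]
  rw [h1, zero_add]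
  exact AddSubmonoid.sum_mem _ fun j _ =>
    AddSubmonoid.nsmul_mem _ (by rw [gens_natAdd]; exact eVec_mem_Amon j) _

lemma Amon_rep {z : Fin d → ℕ} (hz : z ∈ Amon d α) :
    ∃ ζ : Fin (c + d) →₀ ℕ, yOnly c d ζ ∧ valE c d α a ζ = z := by
  induction hz using AddSubmonoid.closure_induction with
  | mem x hx =>
    obtain ⟨j, rfl⟩ := hx
    exact ⟨Finsupp.single (Fin.natAdd c j) 1, yOnly_single j, by
      rw [valE_single, gens_natAdd]⟩
  | zero => exact ⟨0, yOnly_zero, valE_zero⟩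
  | add x y hx hy ihx ihy =>
    obtain ⟨ζ1, h1, hv1⟩ := ihx
    obtain ⟨ζ2, h2, hv2⟩ := ihy
    exact ⟨ζ1 + ζ2, yOnly_add h1 h2, by rw [valE_add, hv1, hv2]⟩

end Aux2

end SimplicialToric
namespace SimplicialToric

section Aux3

variable {c d α : ℕ} {a : Fin c → Fin d → ℕ} {B : AddSubmonoid (Fin d → ℕ)}
  {m : (Fin d → ℕ) → (Fin (c + d) →₀ ℕ)}

lemma split (hBgen : B = AddSubmonoid.closure (Set.range a ∪ Set.range (eVec d α)))
    (hmval : ∀ b ∈ B, valE c d α a (m b) = b)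
    (hmmin : ∀ b ∈ B, ∀ σ, valE c d α a σ = b → m b = σ ∨ grevlex (m b) σ)
    {ν : Fin (c + d) →₀ ℕ} {v : Fin (c + d)}
    (hb : m (valE c d α a (ν + Finsupp.single v 1)) = ν + Finsupp.single v 1) :
    m (valE c d α a ν) = ν := by
  rcases hmmin _ (valE_mem hBgen ν) ν rfl with h | h
  · exact h
  · exfalso
    have hlt : grevlex (m (valE c d α a ν) + Finsupp.single v 1) (ν + Finsupp.single v 1) :=
      grevlex_add_right _ h
    have hval : valE c d α a (m (valE c d α a ν) + Finsupp.single v 1)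
        = valE c d α a (ν + Finsupp.single v 1) := by
      rw [valE_add, valE_add, hmval _ (valE_mem hBgen ν)]
    rcases hmmin _ (valE_mem hBgen (ν + Finsupp.single v 1)) _ hval with h2 | h2
    · rw [hb] at h2
      have : ν = m (valE c d α a ν) := add_right_cancel h2
      rw [← this] at h
      exact grevlex_irrefl ν h
    · rw [hb] at h2
      exact grevlex_asymm h2 hlt

lemma split_var (hBgen : B = AddSubmonoid.closure (Set.range a ∪ Set.range (eVec d α)))
    (hmval : ∀ b ∈ B, valE c d α a (m b) = b)
    (hmmin : ∀ b ∈ B, ∀ σ, valE c d α a σ = b → m b = σ ∨ grevlex (m b) σ)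
    {b' : Fin d → ℕ} (hb' : b' ∈ B) {v : Fin (c + d)} (hge : 1 ≤ m b' v) :
    ∃ ν, m (valE c d α a ν) = ν ∧ m b' = ν + Finsupp.single v 1 ∧
      b' = valE c d α a ν + gens c d α a v := by
  set ν := m b' - Finsupp.single v 1 with hν
  have hle : Finsupp.single v 1 ≤ m b' := Finsupp.single_le_iff.mpr hge
  have hsum : ν + Finsupp.single v 1 = m b' := tsub_add_cancel_of_le hle
  have hval : valE c d α a (ν + Finsupp.single v 1) = b' := by
    rw [hsum]; exact hmval _ hb'
  have hmin : m (valE c d α a (ν + Finsupp.single v 1)) = ν + Finsupp.single v 1 := by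
    rw [hval]; exact hsum.symm
  refine ⟨ν, split hBgen hmval hmmin hmin, hsum.symm, ?_⟩
  rw [← hmval _ hb', ← hsum, valE_add, valE_single]

lemma claimC (hα : 0 < α)
    (hBgen : B = AddSubmonoid.closure (Set.range a ∪ Set.range (eVec d α)))
    (hdeg : ∀ i, ∑ j, a i j = α)
    (hmval : ∀ b ∈ B, valE c d α a (m b) = b)
    (hmmin : ∀ b ∈ B, ∀ σ, valE c d α a σ = b → m b = σ ∨ grevlex (m b) σ)
    {b y z : Fin d → ℕ} (hy : y ∈ B) (hz : z ∈ Amon d α) (hz0 : z ≠ 0) (hb : b = y + z) :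
    ∃ j : Fin d, 1 ≤ m b (Fin.natAdd c j) := by
  by_contra hno
  push_neg at hno
  have hxonly : ∀ j, m b (Fin.natAdd c j) = 0 := fun j => by have := hno j; omega
  have hbB : b ∈ B := hb ▸ B.add_mem hy (Amon_le hBgen hz)
  obtain ⟨ζ, hζy, hζval⟩ := Amon_rep (a := a) hz
  have hζ0 : ζ ≠ 0 := fun h => hz0 (by rw [← hζval, h, valE_zero])
  set σ := m y + ζ with hσ
  have hσval : valE c d α a σ = b := by rw [hσ, valE_add, hmval _ hy, hζval, hb]
  obtain ⟨u, hu⟩ : ∃ u, ζ u ≠ 0 := by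
    by_contra hc; push_neg at hc; exact hζ0 (Finsupp.ext hc)
  obtain ⟨j₀, rfl⟩ : ∃ j, u = Fin.natAdd c j := by
    rcases fin_split u with ⟨i, rfl⟩ | h
    · exact absurd (hζy i) hu
    · exact h
  set D := Finset.univ.filter (fun l => σ l ≠ m b l) with hD
  have hmemD : Fin.natAdd c j₀ ∈ D := by
    have h1 : σ (Fin.natAdd c j₀) = m y (Fin.natAdd c j₀) + ζ (Fin.natAdd c j₀) := rfl
    simp only [hD, Finset.mem_filter, Finset.mem_univ, true_and, h1, hxonly j₀]
    omega
  have hne : D.Nonempty := ⟨_, hmemD⟩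
  set L := D.max' hne with hL
  have hLmem := D.max'_mem hne
  have hLne : σ L ≠ m b L := by
    have := hLmem; simp only [hD, Finset.mem_filter] at this; exact this.2
  have hLge : c ≤ L.val := by
    have h1 : (Fin.natAdd c j₀ : Fin (c + d)) ≤ L := Finset.le_max' D _ hmemD
    have h2 : c ≤ (Fin.natAdd c j₀ : Fin (c + d)).val := by simp
    exact le_trans h2 h1
  have hLy : m b L = 0 := by
    have hLeq : L = Fin.natAdd c ⟨L.val - c, by have := L.isLt; omega⟩ := by
      apply Fin.ext; simp; omega
    rw [hLeq]; exact hxonly _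
  have hgl : grevlex σ (m b) := by
    right
    constructor
    · have h1 := sum_valE (a := a) hdeg σ
      have h2 := sum_valE (a := a) hdeg (m b)
      rw [hσval] at h1
      rw [hmval _ hbB] at h2
      exact Nat.eq_of_mul_eq_mul_left hα (h1 ▸ h2 ▸ rfl : α * degE σ = α * degE (m b))
    · refine ⟨L, by omega, fun l hl => ?_⟩
      by_contra hne2
      exact absurd (Finset.le_max' D l (by simp [hD, hne2])) (not_le.mpr hl)
  rcases hmmin b hbB σ hσval with h | h
  · exact hLne (by rw [h])
  · exact grevlex_asymm h hgl

end Aux3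

end SimplicialToric
namespace SimplicialToric

section Aux4

variable {c d α : ℕ} {a : Fin c → Fin d → ℕ} {B : AddSubmonoid (Fin d → ℕ)}
  {m : (Fin d → ℕ) → (Fin (c + d) →₀ ℕ)}

lemma decomp (hα : 0 < α)
    (hBgen : B = AddSubmonoid.closure (Set.range a ∪ Set.range (eVec d α)))
    (hdeg : ∀ i, ∑ j, a i j = α)
    (hmval : ∀ b ∈ B, valE c d α a (m b) = b)
    (hmmin : ∀ b ∈ B, ∀ σ, valE c d α a σ = b → m b = σ ∨ grevlex (m b) σ)
    {b : Fin d → ℕ} (hbB : b ∈ B) (hnBA : b ∉ BA B α) :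
    ∃ b₂ ∈ B, ∃ j : Fin d,
      m b = m b₂ + Finsupp.single (Fin.natAdd c j) 1 ∧ b = b₂ + eVec d α j := by
  have hex : ∃ z ∈ Amon d α, z ≠ 0 ∧ ∃ y ∈ B, b = y + z := by
    by_contra hc
    push_neg at hc
    exact hnBA ⟨hbB, fun z hz hz0 y hy hxy => (hc z hz hz0 y hy) hxy⟩
  obtain ⟨z, hz, hz0, y, hy, hb⟩ := hex
  obtain ⟨j, hj⟩ := claimC hα hBgen hdeg hmval hmmin hy hz hz0 hb
  obtain ⟨ν, hνmin, hmb, hval⟩ := split_var hBgen hmval hmmin hbB hj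
  refine ⟨valE c d α a ν, valE_mem hBgen ν, j, ?_, ?_⟩
  · rw [hmb, hνmin]
  · rw [hval, gens_natAdd]

lemma sum_add_eVec (b₂ : Fin d → ℕ) (j : Fin d) :
    ∑ j', (b₂ + eVec d α j) j' = (∑ j', b₂ j') + α := by
  simp [Pi.add_apply, Finset.sum_add_distrib, sum_eVec]

lemma lemmaM (hα : 0 < α)
    (hBgen : B = AddSubmonoid.closure (Set.range a ∪ Set.range (eVec d α)))
    (hdeg : ∀ i, ∑ j, a i j = α)
    (hmval : ∀ b ∈ B, valE c d α a (m b) = b)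
    (hmmin : ∀ b ∈ B, ∀ σ, valE c d α a σ = b → m b = σ ∨ grevlex (m b) σ)
    (k : ℕ) : ∀ b ∈ B, (∑ j, b j) ≤ k →
    ∃ b₀ ∈ BA B α, ∃ τ, yOnly c d τ ∧ m b = m b₀ + τ := by
  induction k with
  | zero =>
    intro b hb hk
    by_cases hBA : b ∈ BA B α
    · exact ⟨b, hBA, 0, yOnly_zero, by simp⟩
    · exfalso
      obtain ⟨b₂, hb₂, j, hm2, he⟩ := decomp hα hBgen hdeg hmval hmmin hb hBA
      have hs : ∑ j', b j' = (∑ j', b₂ j') + α := by rw [he]; exact sum_add_eVec b₂ j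
      omega
  | succ k ih =>
    intro b hb hk
    by_cases hBA : b ∈ BA B α
    · exact ⟨b, hBA, 0, yOnly_zero, by simp⟩
    · obtain ⟨b₂, hb₂, j, hm2, he⟩ := decomp hα hBgen hdeg hmval hmmin hb hBA
      have hs : ∑ j', b j' = (∑ j', b₂ j') + α := by rw [he]; exact sum_add_eVec b₂ j
      obtain ⟨b₀, hb₀, τ, hτ, hmb₂⟩ := ih b₂ hb₂ (by omega)
      exact ⟨b₀, hb₀, τ + Finsupp.single (Fin.natAdd c j) 1,
        yOnly_add hτ (yOnly_single j), by rw [hm2, hmb₂, add_assoc]⟩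

lemma dir1 (hα : 0 < α)
    (hBgen : B = AddSubmonoid.closure (Set.range a ∪ Set.range (eVec d α)))
    (hdeg : ∀ i, ∑ j, a i j = α)
    (hmval : ∀ b ∈ B, valE c d α a (m b) = b)
    (hmmin : ∀ b ∈ B, ∀ σ, valE c d α a σ = b → m b = σ ∨ grevlex (m b) σ)
    (k : ℕ) : ∀ σ : Fin (c + d) →₀ ℕ, (∑ i : Fin c, σ (Fin.castAdd d i)) ≤ k →
    (¬ ∃ n ∈ N1set c d α a B m, ∃ ρ, σ = n + ρ) →
    ∃ b ∈ BA B α, ∃ τ, yOnly c d τ ∧ σ = m b + τ := by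
  induction k with
  | zero =>
    intro σ hk _
    have hy : yOnly c d σ := fun i =>
      Finset.sum_eq_zero_iff.mp (Nat.le_zero.mp hk) i (Finset.mem_univ i)
    exact ⟨0, zero_mem_BA, σ, hy, by rw [m_zero hα hdeg hmval, zero_add]⟩
  | succ k ih =>
    intro σ hk hno
    by_cases hx : ∀ i : Fin c, σ (Fin.castAdd d i) = 0
    · exact ⟨0, zero_mem_BA, σ, hx, by rw [m_zero hα hdeg hmval, zero_add]⟩
    push_neg at hx
    obtain ⟨i, hi⟩ := hx
    have hge : 1 ≤ σ (Fin.castAdd d i) := Nat.one_le_iff_ne_zero.mpr hi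
    set v := Fin.castAdd d i with hv
    set σ' := σ - Finsupp.single v 1 with hσ'
    have hsum : Finsupp.single v 1 + σ' = σ :=
      add_tsub_cancel_of_le (Finsupp.single_le_iff.mpr hge)
    have hk' : ∑ i' : Fin c, σ' (Fin.castAdd d i') ≤ k := by
      have h2 : ∑ i' : Fin c, σ (Fin.castAdd d i')
          = (∑ i' : Fin c, σ' (Fin.castAdd d i')) + 1 := by
        rw [← hsum]
        simp only [Finsupp.add_apply, Finset.sum_add_distrib]
        have h3 : ∑ i' : Fin c, (Finsupp.single v 1) (Fin.castAdd d i') = 1 := by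
          rw [Finset.sum_eq_single i]
          · simp [hv]
          · intro i' _ hii
            rw [Finsupp.single_apply_eq_zero]
            intro hcc
            exact ((hii (Fin.castAdd_injective _ _ hcc.symm).symm)).elim
          · intro h; exact absurd (Finset.mem_univ i) h
        omega
      omega
    have hno' : ¬ ∃ n ∈ N1set c d α a B m, ∃ ρ, σ' = n + ρ := by
      rintro ⟨n, hn, ρ, hρ⟩
      exact hno ⟨n, hn, ρ + Finsupp.single v 1, by
        rw [← hsum, hρ, add_comm (Finsupp.single v 1), add_assoc]⟩
    obtain ⟨b, hbBA, τ, hτ, hστ⟩ := ih σ' hk' hno'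
    set n := Finsupp.single v 1 + m b with hn
    by_cases hmin : n = m (a i + b)
    · have haib : a i + b ∈ B := B.add_mem (a_mem hBgen i) hbBA.1
      obtain ⟨b₀, hb₀, τ₀, hτ₀, hm2⟩ :=
        lemmaM hα hBgen hdeg hmval hmmin (∑ j, (a i + b) j) (a i + b) haib le_rfl
      refine ⟨b₀, hb₀, τ₀ + τ, yOnly_add hτ₀ hτ, ?_⟩
      rw [← hsum, hστ, ← add_assoc, ← hn, hmin, hm2, add_assoc]
    · exact absurd ⟨n, ⟨i, b, hbBA, rfl, hmin⟩, τ, by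
        rw [← hsum, hστ, hn, add_assoc]⟩ hno

end Aux4

end SimplicialToric
namespace SimplicialToric

section Aux5

variable {c d α : ℕ} {a : Fin c → Fin d → ℕ} {B : AddSubmonoid (Fin d → ℕ)}
  {m : (Fin d → ℕ) → (Fin (c + d) →₀ ℕ)}

lemma dir2_base (hα : 0 < α)
    (hBgen : B = AddSubmonoid.closure (Set.range a ∪ Set.range (eVec d α)))
    (hdeg : ∀ i, ∑ j, a i j = α)
    (hmval : ∀ b ∈ B, valE c d α a (m b) = b)
    (hmmin : ∀ b ∈ B, ∀ σ, valE c d α a σ = b → m b = σ ∨ grevlex (m b) σ)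
    {i : Fin c} {b b' : Fin d → ℕ} {τ : Fin (c + d) →₀ ℕ}
    (hb : b ∈ BA B α) (hb' : b' ∈ BA B α) (hτ : yOnly c d τ)
    (heq : Finsupp.single (Fin.castAdd d i) 1 + m b = m b' + τ) :
    Finsupp.single (Fin.castAdd d i) 1 + m b = m (a i + b) := by
  set v := Fin.castAdd d i with hv
  have hτv : τ v = 0 := hτ i
  have hge : 1 ≤ m b' v := by
    have h1 := DFunLike.congr_fun heq v
    simp only [Finsupp.add_apply, Finsupp.single_eq_same, hτv] at h1
    omega
  obtain ⟨ν, hνmin, hmb', hval⟩ := split_var hBgen hmval hmmin hb'.1 hge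
  set b₂ := valE c d α a ν with hb₂
  have hb₂B : b₂ ∈ B := valE_mem hBgen ν
  have hb'eq : b' = a i + b₂ := by
    rw [hval, hv, gens_castAdd]
    exact add_comm _ _
  have hb₂BA : b₂ ∈ BA B α := BA_sub hb' (a_mem hBgen i) hb₂B hb'eq
  have hmb : m b = ν + τ := by
    ext u
    have h1 := DFunLike.congr_fun heq u
    rw [hmb'] at h1
    simp only [Finsupp.add_apply] at h1 ⊢
    omega
  have hbval : b = b₂ + valE c d α a τ := by
    rw [← hmval b hb.1, hmb, valE_add]
  have hτ0 : τ = 0 := by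
    by_contra h0
    have hζ : valE c d α a τ ≠ 0 := fun h => h0 (valE_eq_zero hα hdeg h)
    exact hb.2 _ (yOnly_valE_mem_Amon hτ) hζ b₂ hb₂B hbval
  have hbb₂ : b = b₂ := by rw [hbval, hτ0, valE_zero, add_zero]
  have haibb' : a i + b = b' := by rw [hbb₂, ← hb'eq]
  rw [haibb', hmb', hmb, hτ0, add_zero]
  exact add_comm _ _

lemma dir2 (hα : 0 < α)
    (hBgen : B = AddSubmonoid.closure (Set.range a ∪ Set.range (eVec d α)))
    (hdeg : ∀ i, ∑ j, a i j = α)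
    (hmval : ∀ b ∈ B, valE c d α a (m b) = b)
    (hmmin : ∀ b ∈ B, ∀ σ, valE c d α a σ = b → m b = σ ∨ grevlex (m b) σ)
    (k : ℕ) : ∀ ρ : Fin (c + d) →₀ ℕ, degE ρ ≤ k → ∀ n ∈ N1set c d α a B m,
    ∀ b' ∈ BA B α, ∀ τ, yOnly c d τ → n + ρ = m b' + τ → False := by
  induction k with
  | zero =>
    intro ρ hk n hn b' hb' τ hτ heq
    have hρ0 : ρ = 0 := degE_eq_zero (Nat.le_zero.mp hk)
    obtain ⟨i, b, hb, rfl, hne⟩ := hn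
    rw [hρ0, add_zero] at heq
    exact hne (dir2_base hα hBgen hdeg hmval hmmin hb hb' hτ heq)
  | succ k ih =>
    intro ρ hk n hn b' hb' τ hτ heq
    by_cases hρ0 : ρ = 0
    · obtain ⟨i, b, hb, rfl, hne⟩ := hn
      rw [hρ0, add_zero] at heq
      exact hne (dir2_base hα hBgen hdeg hmval hmmin hb hb' hτ heq)
    obtain ⟨u, hu⟩ : ∃ u, ρ u ≠ 0 := by
      by_contra hc; push_neg at hc; exact hρ0 (Finsupp.ext hc)
    have hge : 1 ≤ ρ u := Nat.one_le_iff_ne_zero.mpr hu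
    set ρ' := ρ - Finsupp.single u 1 with hρ'
    have hsum : Finsupp.single u 1 + ρ' = ρ :=
      add_tsub_cancel_of_le (Finsupp.single_le_iff.mpr hge)
    have hdρ : degE ρ' ≤ k := by
      have h1 := degE_add (Finsupp.single u 1) ρ'
      rw [hsum, degE_single] at h1
      omega
    rcases fin_split u with ⟨i', rfl⟩ | ⟨j, rfl⟩
    · -- u is an x-variable
      have hτu : τ (Fin.castAdd d i') = 0 := hτ i'
      have hmge : 1 ≤ m b' (Fin.castAdd d i') := by
        have h1 := DFunLike.congr_fun heq (Fin.castAdd d i')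
        simp only [Finsupp.add_apply, hτu] at h1
        omega
      obtain ⟨ν, hνmin, hmb', hval⟩ := split_var hBgen hmval hmmin hb'.1 hmge
      have hb₂BA : valE c d α a ν ∈ BA B α :=
        BA_sub hb' (a_mem hBgen i') (valE_mem hBgen ν)
          (by rw [hval, gens_castAdd]; exact add_comm _ _)
      have heq' : n + ρ' = m (valE c d α a ν) + τ := by
        rw [hνmin]
        ext w
        have h1 := DFunLike.congr_fun heq w
        rw [hmb', ← hsum] at h1
        simp only [Finsupp.add_apply] at h1 ⊢
        omega
      exact ih ρ' hdρ n hn _ hb₂BA τ hτ heq'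
    · -- u is a y-variable
      have hmb'u : m b' (Fin.natAdd c j) = 0 := by
        by_contra h0
        have hge1 : 1 ≤ m b' (Fin.natAdd c j) := Nat.one_le_iff_ne_zero.mpr h0
        obtain ⟨ν, hνmin, hmb', hval⟩ := split_var hBgen hmval hmmin hb'.1 hge1
        exact hb'.2 (eVec d α j) (eVec_mem_Amon j) (eVec_ne_zero hα j) _
          (valE_mem hBgen ν) (by rw [hval, gens_natAdd])
      have hτu : 1 ≤ τ (Fin.natAdd c j) := by
        have h1 := DFunLike.congr_fun heq (Fin.natAdd c j)
        simp only [Finsupp.add_apply, hmb'u] at h1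
        omega
      set τ' := τ - Finsupp.single (Fin.natAdd c j) 1 with hτ'
      have hτsum : Finsupp.single (Fin.natAdd c j) 1 + τ' = τ :=
        add_tsub_cancel_of_le (Finsupp.single_le_iff.mpr hτu)
      have hτ'y : yOnly c d τ' := fun i => by
        have h2 := hτ i
        rw [← hτsum] at h2
        simp only [Finsupp.add_apply] at h2
        omega
      have heq' : n + ρ' = m b' + τ' := by
        ext w
        have h1 := DFunLike.congr_fun heq w
        rw [← hsum, ← hτsum] at h1
        simp only [Finsupp.add_apply] at h1 ⊢
        omega
      exact ih ρ' hdρ n hn b' hb' τ' hτ'y heq'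

end Aux5

end SimplicialToric


open SimplicialToric

/-- `M_S \ M₁ = ∪_{n ∈ N₁} M_{nS}`: a monomial is not of the form
`m_b·(y-monomial)` with `b ∈ B_A` iff it is divisible by an element of `N₁`. -/
theorem compl_M1_eq_multiples_of_N1
    (c d α : ℕ) (hα : 0 < α)
    (a : Fin c → Fin d → ℕ) (B : AddSubmonoid (Fin d → ℕ))
    (hBgen : B = AddSubmonoid.closure (Set.range a ∪ Set.range (eVec d α)))
    (hhilb : Hilb B = Set.range a ∪ Set.range (eVec d α))
    (hdeg : ∀ i, ∑ j, a i j = α)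
    (m : (Fin d → ℕ) → (Fin (c + d) →₀ ℕ))
    (hmval : ∀ b ∈ B, valE c d α a (m b) = b)
    (hmmin : ∀ b ∈ B, ∀ σ, valE c d α a σ = b → m b = σ ∨ grevlex (m b) σ) :
    ∀ σ : Fin (c + d) →₀ ℕ,
      (¬ ∃ b ∈ BA B α, ∃ τ, yOnly c d τ ∧ σ = m b + τ) ↔
        ∃ n ∈ N1set c d α a B m, ∃ ρ, σ = n + ρ := by
  intro σ
  constructor
  · intro hno
    by_contra hN
    exact hno (dir1 hα hBgen hdeg hmval hmmin _ σ le_rfl hN)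
  · rintro ⟨n, hn, ρ, rfl⟩ ⟨b', hb', τ, hτ, heq⟩
    exact dir2 hα hBgen hdeg hmval hmmin (degE ρ) ρ le_rfl n hn b' hb' τ hτ heq
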